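/- Suppose $\mu_0$ and $\mu_\tau$ are equivalent measures on $Y$ preserved by $f^{\varphi}$ and $f^{\tau}$ respectively, with $\varphi = \tau_\rho$ and $\bar\rho=\int_Y\rho\,d\mu_0<\infty$. Then for all $n\ge1$: $\Big|\sum_{j\ge n}\big(\frac{1}{\bar\varphi}\mu_0(\varphi>j) - \frac{1}{\bar\tau}\mu_\tau(\tau>j)\big)\Big| \le \frac{1}{\bar\varphi}\sum_{k\ge1}\int_{\{\varphi=\tau_{k+1}>n\}} \tau_k\, d\mu_0$. -/

import Mathlib

open MeasureTheory

/-- First return time of `f` to `Y`. -/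
noncomputable def tauFR {X : Type*} (f : X → X) (Y : Set X) (x : X) : ℕ :=
  sInf {n : ℕ | 1 ≤ n ∧ f^[n] x ∈ Y}

/-- The `k`-th return time to `Y`. -/
noncomputable def tauK {X : Type*} (f : X → X) (Y : Set X) : ℕ → X → ℕ
  | 0, _ => 0
  | k + 1, x => tauK f Y k x + tauFR f Y (f^[tauK f Y k x] x)

lemma iterK {X : Type*} (f : X → X) (Y : Set X) (k : ℕ) (y : X) :
    f^[tauK f Y k y] y = (fun x => f^[tauFR f Y x] x)^[k] y := by
  induction k with
  | zero => simp [tauK]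
  | succ k ih =>
      rw [Function.iterate_succ_apply', ← ih]
      show f^[tauK f Y k y + tauFR f Y (f^[tauK f Y k y] y)] y = _
      rw [add_comm, Function.iterate_add_apply]

lemma tauK_eq_sum {X : Type*} (f : X → X) (Y : Set X) (k : ℕ) (y : X) :
    tauK f Y k y = ∑ i ∈ Finset.range k, tauFR f Y ((fun x => f^[tauFR f Y x] x)^[i] y) := by
  induction k with
  | zero => simp [tauK]
  | succ k ih =>
      rw [Finset.sum_range_succ, ← ih]
      show tauK f Y k y + tauFR f Y (f^[tauK f Y k y] y) = _
      rw [iterK]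

lemma nat_sub_sum_le (n m : ℕ) (g : ℕ → ℕ) :
    ∑ k ∈ Finset.range m, (g k - n) ≤ (∑ k ∈ Finset.range m, g k) - n := by
  induction m with
  | zero => simp
  | succ m ih =>
      rw [Finset.sum_range_succ, Finset.sum_range_succ]
      omega

lemma nat_key_upper (n m : ℕ) (g : ℕ → ℕ) :
    (∑ k ∈ Finset.range m, g k) - n ≤ ∑ k ∈ Finset.range m, (g k - n)
      + (if 2 ≤ m ∧ n < ∑ k ∈ Finset.range m, g k then ∑ k ∈ Finset.range (m-1), g k else 0) := by
  match m with
  | 0 => simp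
  | 1 => simp
  | (m+2) =>
      by_cases h : n < ∑ k ∈ Finset.range (m+2), g k
      · rw [if_pos ⟨by omega, h⟩]
        have h1 : ∑ k ∈ Finset.range (m+2), g k
            = ∑ k ∈ Finset.range (m+1), g k + g (m+1) := Finset.sum_range_succ g (m+1)
        have h2 : g (m+1) - n ≤ ∑ k ∈ Finset.range (m+2), (g k - n) := by
          rw [Finset.sum_range_succ]
          omega
        have h3 : ∑ k ∈ Finset.range (m+2-1), g k = ∑ k ∈ Finset.range (m+1), g k := by
          norm_num
        omega
      · rw [if_neg (by tauto)]
        omega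

noncomputable def eN (n : ℕ) (t : ENNReal) : ENNReal :=
  ∑' j : ℕ, if ((n + j : ℕ) : ENNReal) < t then 1 else 0

lemma eN_cast (n m : ℕ) : eN n ((m : ℕ) : ENNReal) = ((m - n : ℕ) : ENNReal) := by
  unfold eN
  rw [tsum_eq_sum (s := Finset.range (m - n)) (by
    intro j hj
    simp only [Finset.mem_range, not_lt] at hj
    rw [if_neg]
    rw [Nat.cast_lt]
    omega)]
  rw [Finset.sum_congr rfl (fun j hj => by
    simp only [Finset.mem_range] at hj
    rw [if_pos (by rw [Nat.cast_lt]; omega)])]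
  simp

lemma eN_zero (n : ℕ) : eN n 0 = 0 := by
  unfold eN
  simp

lemma eN_meas {X : Type*} [MeasurableSpace X] {u : X → ENNReal} (hu : Measurable u) (n : ℕ) :
    Measurable (fun x => eN n (u x)) := by
  unfold eN
  apply Measurable.ennreal_tsum
  intro j
  exact Measurable.ite (hu measurableSet_Ioi) measurable_const measurable_const

lemma sum_meas_eq_lintegral {X : Type*} [MeasurableSpace X] (μ : Measure X)
    (u : X → ENNReal) (hu : Measurable u) (n : ℕ) :
    ∑' j : ℕ, μ {x | ((n + j : ℕ) : ENNReal) < u x} = ∫⁻ x, eN n (u x) ∂μ := by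
  unfold eN
  have hmeas : ∀ j : ℕ, Measurable (fun x => if ((n + j : ℕ) : ENNReal) < u x then (1:ENNReal) else 0) :=
    fun j => Measurable.ite (hu measurableSet_Ioi) measurable_const measurable_const
  have h1 : ∀ j : ℕ, μ {x | ((n + j : ℕ) : ENNReal) < u x}
      = ∫⁻ x, (if ((n + j : ℕ) : ENNReal) < u x then (1:ENNReal) else 0) ∂μ := by
    intro j
    have : ∀ x, (if ((n + j : ℕ) : ENNReal) < u x then (1:ENNReal) else 0)
        = Set.indicator {x | ((n + j : ℕ) : ENNReal) < u x} 1 x := by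
      intro x; rw [Set.indicator_apply]; rfl
    simp_rw [this]
    exact (lintegral_indicator_one
      (show MeasurableSet {x | ((n + j : ℕ) : ENNReal) < u x} from hu measurableSet_Ioi)).symm
  simp_rw [h1]
  exact (lintegral_tsum (fun j => (hmeas j).aemeasurable)).symm

lemma natMK {X : Type*} [MeasurableSpace X] (μ : Measure X) (g : X → ℕ)
    (h : AEMeasurable (fun x => (g x : ℝ)) μ) :
    ∃ gM : X → ℕ, Measurable gM ∧ g =ᶠ[ae μ] gM := by
  refine ⟨fun x => ⌊h.mk _ x⌋₊, Nat.measurable_floor.comp h.measurable_mk, ?_⟩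
  filter_upwards [h.ae_eq_mk] with x hx
  simp only [← hx, Nat.floor_natCast]

lemma sum_meas_eq_lintegral0 {X : Type*} [MeasurableSpace X] (μ : Measure X)
    (u : X → ENNReal) (hu : Measurable u) :
    ∑' j : ℕ, μ {x | ((j : ℕ) : ENNReal) < u x} = ∫⁻ x, eN 0 (u x) ∂μ := by
  have := sum_meas_eq_lintegral μ u hu 0
  simpa using this

lemma sum_meas_nat {X : Type*} [MeasurableSpace X] (μ : Measure X) (g : X → ℕ)
    (hg : Measurable (fun x => ((g x : ℕ) : ENNReal))) :
    ∑' k : ℕ, μ {x | k < g x} = ∫⁻ x, ((g x : ℕ) : ENNReal) ∂μ := by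
  have h1 : ∀ k : ℕ, {x | k < g x} = {x | ((k : ℕ) : ENNReal) < ((g x : ℕ) : ENNReal)} := by
    intro k; ext x; simp [Nat.cast_lt]
  calc ∑' k : ℕ, μ {x | k < g x}
      = ∑' k : ℕ, μ {x | ((k : ℕ) : ENNReal) < ((g x : ℕ) : ENNReal)} := by
        congr 1; ext k; rw [h1]
    _ = ∫⁻ x, eN 0 ((g x : ℕ) : ENNReal) ∂μ := sum_meas_eq_lintegral0 μ _ hg
    _ = ∫⁻ x, ((g x : ℕ) : ENNReal) ∂μ := by
        apply lintegral_congr_ae; filter_upwards with x; rw [eN_cast]; simp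

theorem stmt12 {X : Type*} [MeasurableSpace X] (f : X → X) (Y : Set X)
    (μ0 μτ : Measure X) [IsProbabilityMeasure μ0] [IsProbabilityMeasure μτ]
    (hμ0Y : μ0 Yᶜ = 0) (hμτY : μτ Yᶜ = 0)
    (hequiv : μ0 ≪ μτ ∧ μτ ≪ μ0)
    (ρ : X → ℕ) (φ : X → ℕ) (hφ : ∀ x, φ x = tauK f Y (ρ x) x)
    (hpres0 : MeasurePreserving (fun x => f^[φ x] x) μ0 μ0)
    (hpresτ : MeasurePreserving (fun x => f^[tauFR f Y x] x) μτ μτ)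
    (hρint : Integrable (fun x => (ρ x : ℝ)) μ0)
    (ρbar : ℝ) (hρbar : ρbar = ∫ x, (ρ x : ℝ) ∂μ0)
    (hμτ : ∀ A : Set X, MeasurableSet A → (μτ A).toReal
      = (1 / ρbar) * ∑' k : ℕ, (μ0 {y | k < ρ y ∧ f^[tauK f Y k y] y ∈ A}).toReal)
    (φbar τbar : ℝ)
    (hφbar : φbar = ∫ x, (φ x : ℝ) ∂μ0) (hτbar : τbar = ∫ x, (tauFR f Y x : ℝ) ∂μτ)
    (hφint : Integrable (fun x => (φ x : ℝ)) μ0)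
    (hτint : Integrable (fun x => (tauFR f Y x : ℝ)) μτ) :
    ∀ n : ℕ, 1 ≤ n →
      |∑' j : ℕ, ((1 / φbar) * (μ0 {y | n + j < φ y}).toReal
          - (1 / τbar) * (μτ {y | n + j < tauFR f Y y}).toReal)|
        ≤ (1 / φbar) * ∑' k : ℕ,
            ∫ y in {y | ρ y = k + 2 ∧ n < φ y}, (tauK f Y (k + 1) y : ℝ) ∂μ0 := by
  intro n _hn
  classical
  set F : X → X := fun x => f^[tauFR f Y x] x with hF
  have hFmeas : Measurable F := hpresτ.measurable
  -- measurable ℕ-valued versions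
  obtain ⟨ρM, hρM_meas, hρM_ae⟩ := natMK μ0 ρ hρint.aemeasurable
  obtain ⟨τM, hτM_meas, hτM_ae⟩ := natMK μτ (tauFR f Y) hτint.aemeasurable
  have hτMc : Measurable (fun x => ((τM x : ℕ) : ENNReal)) := measurable_from_top.comp hτM_meas
  have hρMc : Measurable (fun x => ((ρM x : ℕ) : ENNReal)) := measurable_from_top.comp hρM_meas
  -- finiteness of basic lintegrals
  have hρlint : ∫⁻ x, ((ρM x : ℕ) : ENNReal) ∂μ0 < ⊤ := by
    have h1 : ∫⁻ x, ((ρM x : ℕ) : ENNReal) ∂μ0 = ∫⁻ x, ENNReal.ofReal ((ρ x : ℝ)) ∂μ0 := by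
      apply lintegral_congr_ae
      filter_upwards [hρM_ae] with x hx
      rw [← hx, ENNReal.ofReal_natCast]
    rw [h1]; exact hρint.lintegral_lt_top
  have hτlint : ∫⁻ x, ((τM x : ℕ) : ENNReal) ∂μτ < ⊤ := by
    have h1 : ∫⁻ x, ((τM x : ℕ) : ENNReal) ∂μτ = ∫⁻ x, ENNReal.ofReal ((tauFR f Y x : ℝ)) ∂μτ := by
      apply lintegral_congr_ae
      filter_upwards [hτM_ae] with x hx
      rw [← hx, ENNReal.ofReal_natCast]
    rw [h1]; exact hτint.lintegral_lt_top
  -- ρbar positive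
  have hρbar_nonneg : 0 ≤ ρbar := by
    rw [hρbar]; exact integral_nonneg (fun x => by positivity)
  have hρbar_ne : ρbar ≠ 0 := by
    intro h0
    have h1 := hμτ Set.univ MeasurableSet.univ
    rw [h0] at h1
    simp [measure_univ] at h1
  -- the good a.e. set
  have hτnull : μτ {x | ¬ tauFR f Y x = τM x} = 0 := by
    have h := hτM_ae
    rwa [Filter.EventuallyEq, ae_iff] at h
  obtain ⟨N, hNsub, hNmeas, hNnull⟩ := exists_measurable_superset_of_null hτnull
  have hρset : ∀ k : ℕ, μ0 {x | k < ρ x} = μ0 {x | k < ρM x} := by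
    intro k
    apply measure_congr
    apply Filter.eventuallyEq_set.mpr
    filter_upwards [hρM_ae] with x hx
    rw [hx]
  have hsumfin : (∑' k : ℕ, μ0 {y | k < ρ y ∧ f^[tauK f Y k y] y ∈ N}) ≠ ⊤ := by
    refine ne_top_of_le_ne_top (by rw [sum_meas_nat μ0 ρM hρMc]; exact hρlint.ne)
      (ENNReal.tsum_le_tsum fun k => ?_)
    calc μ0 {y | k < ρ y ∧ f^[tauK f Y k y] y ∈ N} ≤ μ0 {x | k < ρ x} :=
          measure_mono (fun y hy => hy.1)
      _ = _ := hρset k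
  have hSk0 : ∀ k : ℕ, μ0 {y | k < ρ y ∧ f^[tauK f Y k y] y ∈ N} = 0 := by
    have hsummable : Summable (fun k : ℕ =>
        (μ0 {y | k < ρ y ∧ f^[tauK f Y k y] y ∈ N}).toReal) := ENNReal.summable_toReal hsumfin
    have hμτN := hμτ N hNmeas
    rw [hNnull] at hμτN
    simp only [ENNReal.toReal_zero] at hμτN
    have hz : (∑' k : ℕ, (μ0 {y | k < ρ y ∧ f^[tauK f Y k y] y ∈ N}).toReal) = 0 := by
      rcases mul_eq_zero.mp hμτN.symm with h | h
      · exact absurd h (by simp [hρbar_ne])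
      · exact h
    intro k
    have hterm : (μ0 {y | k < ρ y ∧ f^[tauK f Y k y] y ∈ N}).toReal ≤ 0 :=
      hz ▸ Summable.le_tsum hsummable k (fun j _ => ENNReal.toReal_nonneg)
    have h0 : (μ0 {y | k < ρ y ∧ f^[tauK f Y k y] y ∈ N}).toReal = 0 :=
      le_antisymm hterm ENNReal.toReal_nonneg
    rcases (ENNReal.toReal_eq_zero_iff _).mp h0 with h | h
    · exact h
    · exact absurd h (measure_ne_top μ0 _)
  have hgood : ∀ᵐ x ∂μ0, ρ x = ρM x ∧
      ∀ k, k < ρM x → tauFR f Y (F^[k] x) = τM (F^[k] x) := by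
    refine hρM_ae.and ?_
    rw [ae_all_iff]
    intro k
    have h0 : μ0 {x | k < ρ x ∧ ¬ tauFR f Y (F^[k] x) = τM (F^[k] x)} = 0 := by
      refine measure_mono_null (fun x hx => ?_) (hSk0 k)
      refine ⟨hx.1, ?_⟩
      rw [iterK, ← hF]
      exact hNsub hx.2
    have h1 : ∀ᵐ x ∂μ0, k < ρ x → tauFR f Y (F^[k] x) = τM (F^[k] x) := by
      rw [ae_iff]
      refine measure_mono_null (fun x hx => ?_) h0
      rw [Set.mem_setOf_eq, _root_.not_imp] at hx
      exact hx
    filter_upwards [h1, hρM_ae] with x hx hx2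
    intro hk
    exact hx (by rw [hx2]; exact hk)
  -- main objects
  set G : ℕ → X → ENNReal :=
    fun k x => if k < ρM x then ((τM (F^[k] x) : ℕ) : ENNReal) else 0 with hGdef
  have hGmeas : ∀ k, Measurable (G k) := by
    intro k
    exact Measurable.ite (hρM_meas (show MeasurableSet (Set.Ioi k) from trivial))
      (measurable_from_top.comp (hτM_meas.comp (hFmeas.iterate k))) measurable_const
  set Φ : X → ENNReal := fun x => ∑' k, G k x with hΦdef
  have hΦmeas : Measurable Φ := Measurable.ennreal_tsum hGmeas
  -- pointwise values on the good set
  have hφsum : ∀ x, ρ x = ρM x →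
      (∀ k, k < ρM x → tauFR f Y (F^[k] x) = τM (F^[k] x)) →
      φ x = ∑ i ∈ Finset.range (ρM x), τM (F^[i] x) := by
    intro x hx1 hx2
    rw [hφ, hx1, tauK_eq_sum]
    refine Finset.sum_congr rfl (fun k hk => ?_)
    rw [← hF]
    exact hx2 k (Finset.mem_range.mp hk)
  have hΦx : ∀ x, ρ x = ρM x →
      (∀ k, k < ρM x → tauFR f Y (F^[k] x) = τM (F^[k] x)) →
      Φ x = ((φ x : ℕ) : ENNReal) := by
    intro x hx1 hx2
    have h1 : ∀ k, k ∉ Finset.range (ρM x) → G k x = 0 := by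
      intro k hk
      simp only [Finset.mem_range, not_lt] at hk
      simp only [hGdef]
      rw [if_neg (by omega)]
    calc Φ x = ∑ k ∈ Finset.range (ρM x), G k x := tsum_eq_sum h1
      _ = ∑ k ∈ Finset.range (ρM x), ((τM (F^[k] x) : ℕ) : ENNReal) :=
          Finset.sum_congr rfl (fun k hk => by
            simp only [hGdef]
            exact if_pos (Finset.mem_range.mp hk))
      _ = ((∑ k ∈ Finset.range (ρM x), τM (F^[k] x) : ℕ) : ENNReal) := (Nat.cast_sum _ _).symm
      _ = ((φ x : ℕ) : ENNReal) := by rw [hφsum x hx1 hx2]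
  set D : X → ENNReal := fun x => ∑' k, if (ρM x = k + 2 ∧ ((n : ℕ) : ENNReal) < Φ x)
      then ((∑ i ∈ Finset.range (k+1), τM (F^[i] x) : ℕ) : ENNReal) else 0 with hDdef
  have hvmeas : ∀ k : ℕ, Measurable
      (fun x => ((∑ i ∈ Finset.range (k+1), τM (F^[i] x) : ℕ) : ENNReal)) := by
    intro k
    have h1 : Measurable (fun x => ∑ i ∈ Finset.range (k+1), ((τM (F^[i] x) : ℕ) : ENNReal)) :=
      Finset.measurable_sum _ (fun i _ => measurable_from_top.comp (hτM_meas.comp (hFmeas.iterate i)))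
    have h2 : (fun x => ((∑ i ∈ Finset.range (k+1), τM (F^[i] x) : ℕ) : ENNReal))
        = fun x => ∑ i ∈ Finset.range (k+1), ((τM (F^[i] x) : ℕ) : ENNReal) :=
      funext fun x => Nat.cast_sum _ _
    rw [h2]; exact h1
  have hTmeas : ∀ k : ℕ, MeasurableSet {x | ρM x = k + 2 ∧ ((n : ℕ) : ENNReal) < Φ x} := by
    intro k
    rw [Set.setOf_and]
    exact (hρM_meas (show MeasurableSet {m | m = k + 2} from trivial)).inter
      (hΦmeas measurableSet_Ioi)
  have hDmeas : Measurable D := by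
    simp only [hDdef]
    refine Measurable.ennreal_tsum (fun k => ?_)
    exact Measurable.ite (hTmeas k) (hvmeas k) measurable_const
  -- key pointwise inequalities
  have key : ∀ᵐ x ∂μ0, (∑' k, eN n (G k x)) ≤ eN n (Φ x)
      ∧ eN n (Φ x) ≤ (∑' k, eN n (G k x)) + D x
      ∧ D x ≤ Φ x ∧ eN n (Φ x) ≤ Φ x ∧ Φ x = ((φ x : ℕ) : ENNReal) := by
    filter_upwards [hgood] with x hx
    obtain ⟨hx1, hx2⟩ := hx
    have hΦeq : Φ x = ((φ x : ℕ) : ENNReal) := hΦx x hx1 hx2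
    have hφs : φ x = ∑ i ∈ Finset.range (ρM x), τM (F^[i] x) := hφsum x hx1 hx2
    have hENG : ∀ k, eN n (G k x)
        = if k < ρM x then ((τM (F^[k] x) - n : ℕ) : ENNReal) else 0 := by
      intro k
      by_cases hk : k < ρM x
      · simp only [hGdef]; rw [if_pos hk, if_pos hk, eN_cast]
      · simp only [hGdef]; rw [if_neg hk, if_neg hk, eN_zero]
    have hsumG : (∑' k, eN n (G k x))
        = ((∑ k ∈ Finset.range (ρM x), (τM (F^[k] x) - n) : ℕ) : ENNReal) := by
      calc (∑' k, eN n (G k x))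
          = ∑ k ∈ Finset.range (ρM x), eN n (G k x) := tsum_eq_sum (by
            intro k hk
            rw [hENG k, if_neg (by simpa using hk)])
        _ = ∑ k ∈ Finset.range (ρM x), ((τM (F^[k] x) - n : ℕ) : ENNReal) :=
            Finset.sum_congr rfl (fun k hk => by rw [hENG k, if_pos (Finset.mem_range.mp hk)])
        _ = _ := (Nat.cast_sum _ _).symm
    have hENΦ : eN n (Φ x)
        = ((∑ i ∈ Finset.range (ρM x), τM (F^[i] x) - n : ℕ) : ENNReal) := by
      rw [hΦeq, eN_cast, hφs]
    have hDx : D x = if 2 ≤ ρM x ∧ n < ∑ i ∈ Finset.range (ρM x), τM (F^[i] x)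
        then ((∑ i ∈ Finset.range (ρM x - 1), τM (F^[i] x) : ℕ) : ENNReal) else 0 := by
      simp only [hDdef]
      by_cases hc : 2 ≤ ρM x ∧ n < ∑ i ∈ Finset.range (ρM x), τM (F^[i] x)
      · rw [if_pos hc]
        rw [tsum_eq_single (ρM x - 2) ?_]
        · rw [if_pos ⟨by omega, by rw [hΦeq, Nat.cast_lt, hφs]; exact hc.2⟩]
          have he : ρM x - 2 + 1 = ρM x - 1 := by omega
          rw [he]
        · intro k hk
          rw [if_neg]
          rintro ⟨h1, -⟩
          omega
      · rw [if_neg hc]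
        refine (tsum_eq_sum (s := (∅ : Finset ℕ)) ?_).trans (by simp)
        intro k _
        rw [if_neg]
        rintro ⟨h1, h2⟩
        rw [hΦeq, Nat.cast_lt, hφs] at h2
        exact hc ⟨by omega, h2⟩
    refine ⟨?_, ?_, ?_, ?_, hΦeq⟩
    · rw [hsumG, hENΦ, Nat.cast_le]
      exact nat_sub_sum_le n (ρM x) (fun i => τM (F^[i] x))
    · by_cases hc : 2 ≤ ρM x ∧ n < ∑ i ∈ Finset.range (ρM x), τM (F^[i] x)
      · rw [hsumG, hENΦ, hDx, if_pos hc, ← Nat.cast_add, Nat.cast_le]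
        have h := nat_key_upper n (ρM x) (fun i => τM (F^[i] x))
        rwa [if_pos hc] at h
      · rw [hsumG, hENΦ, hDx, if_neg hc, add_zero, Nat.cast_le]
        have h := nat_key_upper n (ρM x) (fun i => τM (F^[i] x))
        rwa [if_neg hc, add_zero] at h
    · rw [hDx, hΦeq, hφs]
      by_cases hc : 2 ≤ ρM x ∧ n < ∑ i ∈ Finset.range (ρM x), τM (F^[i] x)
      · rw [if_pos hc, Nat.cast_le]
        exact Finset.sum_le_sum_of_subset (Finset.range_subset_range.mpr (by omega))
      · rw [if_neg hc]
        exact zero_le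
    · rw [hENΦ, hΦeq, hφs, Nat.cast_le]
      omega
  -- ENNReal quantities
  set A : ENNReal := ∑' j : ℕ, μ0 {x | ((n + j : ℕ) : ENNReal) < Φ x} with hAdef
  set C : ENNReal := ∫⁻ x, ∑' k, eN n (G k x) ∂μ0 with hCdef
  have hA : A = ∫⁻ x, eN n (Φ x) ∂μ0 := sum_meas_eq_lintegral μ0 Φ hΦmeas n
  have hC2 : C = ∑' k, ∑' j : ℕ, μ0 {x | ((n + j : ℕ) : ENNReal) < G k x} := by
    rw [hCdef, lintegral_tsum (fun k => (eN_meas (hGmeas k) n).aemeasurable)]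
    exact tsum_congr (fun k => (sum_meas_eq_lintegral μ0 (G k) (hGmeas k) n).symm)
  have hΦlint : ∫⁻ x, Φ x ∂μ0 < ⊤ := by
    have h1 : ∫⁻ x, Φ x ∂μ0 = ∫⁻ x, ENNReal.ofReal ((φ x : ℝ)) ∂μ0 := by
      apply lintegral_congr_ae
      filter_upwards [hgood] with x hx
      rw [hΦx x hx.1 hx.2, ENNReal.ofReal_natCast]
    rw [h1]; exact hφint.lintegral_lt_top
  have hAfin : A ≠ ⊤ := by
    rw [hA]
    exact ne_top_of_le_ne_top hΦlint.ne
      (lintegral_mono_ae (key.mono fun x hx => hx.2.2.2.1))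
  have hDlint : ∫⁻ x, D x ∂μ0 ≠ ⊤ :=
    ne_top_of_le_ne_top hΦlint.ne (lintegral_mono_ae (key.mono fun x hx => hx.2.2.1))
  have hCA : C ≤ A := by
    rw [hA]; exact lintegral_mono_ae (key.mono fun x hx => hx.1)
  have hCfin : C ≠ ⊤ := (lt_of_le_of_lt hCA (lt_of_le_of_ne (le_top) hAfin)).ne
  have hACD : A ≤ C + ∫⁻ x, D x ∂μ0 := by
    rw [hA]
    calc ∫⁻ x, eN n (Φ x) ∂μ0 ≤ ∫⁻ x, ((∑' k, eN n (G k x)) + D x) ∂μ0 :=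
          lintegral_mono_ae (key.mono fun x hx => hx.2.1)
      _ = C + ∫⁻ x, D x ∂μ0 := by
          rw [hCdef]
          exact lintegral_add_left (Measurable.ennreal_tsum (fun k => eN_meas (hGmeas k) n)) _
  -- the W bridge from hμτ
  have hGsub : ∀ (m k : ℕ), {x | ((m : ℕ) : ENNReal) < G k x} ⊆ {x | k < ρM x} := by
    intro m k x hx
    by_contra hk
    have hk' : ¬ k < ρM x := by simpa using hk
    have : G k x = 0 := by simp only [hGdef]; rw [if_neg hk']
    rw [Set.mem_setOf_eq, this] at hx
    exact ENNReal.not_lt_zero hx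
  have hW : ∀ m : ℕ, (∑' k, μ0 {x | ((m : ℕ) : ENNReal) < G k x}) ≠ ⊤ ∧
      ρbar * (μτ {x | m < tauFR f Y x}).toReal
        = (∑' k, μ0 {x | ((m : ℕ) : ENNReal) < G k x}).toReal := by
    intro m
    have hWfin : (∑' k, μ0 {x | ((m : ℕ) : ENNReal) < G k x}) ≠ ⊤ := by
      refine ne_top_of_le_ne_top (by rw [sum_meas_nat μ0 ρM hρMc]; exact hρlint.ne)
        (ENNReal.tsum_le_tsum fun k => measure_mono (hGsub m k))
    refine ⟨hWfin, ?_⟩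
    have hA' := hμτ {z | m < τM z} (hτM_meas (show MeasurableSet (Set.Ioi m) from trivial))
    have hL : μτ {z | m < τM z} = μτ {x | m < tauFR f Y x} := by
      apply measure_congr
      apply Filter.eventuallyEq_set.mpr
      filter_upwards [hτM_ae] with x hx
      simp only [Set.mem_setOf_eq, hx]
    have hT : ∀ k : ℕ, μ0 {y | k < ρ y ∧ f^[tauK f Y k y] y ∈ {z | m < τM z}}
        = μ0 {x | ((m : ℕ) : ENNReal) < G k x} := by
      intro k
      apply measure_congr
      apply Filter.eventuallyEq_set.mpr
      filter_upwards [hρM_ae] with x hx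
      simp only [Set.mem_setOf_eq, hGdef]
      rw [iterK, ← hF, hx]
      by_cases hk : k < ρM x
      · rw [if_pos hk]
        simp [Nat.cast_lt, hk]
      · rw [if_neg hk]
        simp [hk]
    rw [hL] at hA'
    rw [hA']
    simp_rw [hT]
    rw [ENNReal.tsum_toReal_eq (fun k => measure_ne_top μ0 _)]
    rw [← mul_assoc, mul_one_div, div_self hρbar_ne, one_mul]
  -- τbar and φbar identities
  have hτset : ∀ m : ℕ, μτ {x | m < tauFR f Y x} = μτ {x | m < τM x} := by
    intro m
    apply measure_congr
    apply Filter.eventuallyEq_set.mpr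
    filter_upwards [hτM_ae] with x hx
    simp only [Set.mem_setOf_eq, hx]
  have hτsum : (∑' m : ℕ, μτ {x | m < tauFR f Y x}) = ∫⁻ x, ((τM x : ℕ) : ENNReal) ∂μτ := by
    rw [tsum_congr hτset]
    exact sum_meas_nat μτ τM hτMc
  have hτsum_fin : (∑' m : ℕ, μτ {x | m < tauFR f Y x}) ≠ ⊤ := by
    rw [hτsum]; exact hτlint.ne
  have hτbar2 : τbar = (∑' m : ℕ, μτ {x | m < tauFR f Y x}).toReal := by
    rw [hτbar, integral_eq_lintegral_of_nonneg_ae (Filter.Eventually.of_forall (fun x => by positivity))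
      hτint.aestronglyMeasurable, hτsum]
    congr 1
    apply lintegral_congr_ae
    filter_upwards [hτM_ae] with x hx
    rw [hx, ENNReal.ofReal_natCast]
  have hφbar2 : φbar = (∫⁻ x, Φ x ∂μ0).toReal := by
    rw [hφbar, integral_eq_lintegral_of_nonneg_ae (Filter.Eventually.of_forall (fun x => by positivity))
      hφint.aestronglyMeasurable]
    congr 1
    apply lintegral_congr_ae
    filter_upwards [hgood] with x hx
    rw [hΦx x hx.1 hx.2, ENNReal.ofReal_natCast]
  have hφρτ : φbar = ρbar * τbar := by
    have e1 : ∀ k : ℕ, (∑' m : ℕ, μ0 {x | ((m : ℕ) : ENNReal) < G k x}) = ∫⁻ x, G k x ∂μ0 := by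
      intro k
      rw [sum_meas_eq_lintegral0 μ0 (G k) (hGmeas k)]
      apply lintegral_congr_ae
      apply Filter.Eventually.of_forall
      intro x
      by_cases hk : k < ρM x
      · have h3 : G k x = ((τM (F^[k] x) : ℕ) : ENNReal) := by simp only [hGdef]; rw [if_pos hk]
        simp only [h3, eN_cast, Nat.sub_zero]
      · have h3 : G k x = 0 := by simp only [hGdef]; rw [if_neg hk]
        simp only [h3, eN_zero]
    have e2 : (∑' m : ℕ, ∑' k : ℕ, μ0 {x | ((m : ℕ) : ENNReal) < G k x}) = ∫⁻ x, Φ x ∂μ0 := by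
      rw [ENNReal.tsum_comm, tsum_congr e1,
        ← lintegral_tsum (fun k => (hGmeas k).aemeasurable)]
    have : ρbar * τbar = φbar := by
      calc ρbar * τbar = ρbar * ∑' m : ℕ, (μτ {x | m < tauFR f Y x}).toReal := by
            rw [hτbar2, ENNReal.tsum_toReal_eq (fun m => measure_ne_top _ _)]
        _ = ∑' m : ℕ, ρbar * (μτ {x | m < tauFR f Y x}).toReal := tsum_mul_left.symm
        _ = ∑' m : ℕ, (∑' k : ℕ, μ0 {x | ((m : ℕ) : ENNReal) < G k x}).toReal :=
            tsum_congr (fun m => (hW m).2)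
        _ = (∑' m : ℕ, ∑' k : ℕ, μ0 {x | ((m : ℕ) : ENNReal) < G k x}).toReal :=
            (ENNReal.tsum_toReal_eq (fun m => (hW m).1)).symm
        _ = (∫⁻ x, Φ x ∂μ0).toReal := by rw [e2]
        _ = φbar := hφbar2.symm
    exact this.symm
  have hφbar_nonneg : 0 ≤ φbar := by
    rw [hφbar]; exact integral_nonneg (fun x => by positivity)
  -- B-side
  set Bt : ENNReal := ∑' j : ℕ, μτ {x | n + j < tauFR f Y x} with hBtdef
  have hBtfin : Bt ≠ ⊤ := by
    refine ne_top_of_le_ne_top hτsum_fin (ENNReal.tsum_le_tsum fun j => ?_)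
    exact measure_mono (fun x hx => lt_of_le_of_lt (Nat.le_add_left j n) hx)
  have hBtC : ρbar * Bt.toReal = C.toReal := by
    rw [hBtdef, ENNReal.tsum_toReal_eq (fun j => measure_ne_top _ _), ← tsum_mul_left]
    calc (∑' j : ℕ, ρbar * (μτ {x | n + j < tauFR f Y x}).toReal)
        = ∑' j : ℕ, (∑' k : ℕ, μ0 {x | ((n + j : ℕ) : ENNReal) < G k x}).toReal :=
          tsum_congr (fun j => (hW (n + j)).2)
      _ = (∑' j : ℕ, ∑' k : ℕ, μ0 {x | ((n + j : ℕ) : ENNReal) < G k x}).toReal :=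
          (ENNReal.tsum_toReal_eq (fun j => (hW (n + j)).1)).symm
      _ = C.toReal := by rw [hC2, ENNReal.tsum_comm]
  -- A-side set identification
  have hμ0set : ∀ j : ℕ, μ0 {y | n + j < φ y} = μ0 {x | ((n + j : ℕ) : ENNReal) < Φ x} := by
    intro j
    apply measure_congr
    apply Filter.eventuallyEq_set.mpr
    filter_upwards [hgood] with x hx
    simp only [Set.mem_setOf_eq, hΦx x hx.1 hx.2, Nat.cast_lt]
  -- R-side
  have hTae : ∀ k : ℕ, {y | ρ y = k + 2 ∧ n < φ y}
      =ᶠ[ae μ0] {x | ρM x = k + 2 ∧ ((n : ℕ) : ENNReal) < Φ x} := by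
    intro k
    apply Filter.eventuallyEq_set.mpr
    filter_upwards [hgood] with x hx
    simp only [Set.mem_setOf_eq, ← hx.1, hΦx x hx.1 hx.2, Nat.cast_lt]
  have hvle : ∀ k : ℕ, ∀ x, x ∈ {x | ρM x = k + 2 ∧ ((n : ℕ) : ENNReal) < Φ x} →
      ((∑ i ∈ Finset.range (k+1), τM (F^[i] x) : ℕ) : ENNReal) ≤ Φ x := by
    intro k x hx
    have h1 : ((∑ i ∈ Finset.range (k+1), τM (F^[i] x) : ℕ) : ENNReal)
        = ∑ i ∈ Finset.range (k+1), G i x := by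
      rw [Nat.cast_sum]
      refine Finset.sum_congr rfl (fun i hi => ?_)
      simp only [hGdef]
      rw [if_pos (by have := hx.1; have := Finset.mem_range.mp hi; omega)]
    rw [h1]
    exact ENNReal.sum_le_tsum _
  have hfink : ∀ k : ℕ, (∫⁻ x in {x | ρM x = k + 2 ∧ ((n : ℕ) : ENNReal) < Φ x},
      ((∑ i ∈ Finset.range (k+1), τM (F^[i] x) : ℕ) : ENNReal) ∂μ0) ≠ ⊤ := by
    intro k
    refine ne_top_of_le_ne_top hΦlint.ne ?_
    calc (∫⁻ x in {x | ρM x = k + 2 ∧ ((n : ℕ) : ENNReal) < Φ x},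
        ((∑ i ∈ Finset.range (k+1), τM (F^[i] x) : ℕ) : ENNReal) ∂μ0)
        ≤ ∫⁻ x in {x | ρM x = k + 2 ∧ ((n : ℕ) : ENNReal) < Φ x}, Φ x ∂μ0 := by
          refine lintegral_mono_ae ?_
          rw [ae_restrict_iff' (hTmeas k)]
          exact Filter.Eventually.of_forall (hvle k)
      _ ≤ ∫⁻ x, Φ x ∂μ0 := setLIntegral_le_lintegral _ _
  have hre : ∀ k : ℕ, (∫ y in {y | ρ y = k + 2 ∧ n < φ y}, (tauK f Y (k + 1) y : ℝ) ∂μ0)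
      = (∫⁻ x in {x | ρM x = k + 2 ∧ ((n : ℕ) : ENNReal) < Φ x},
        ((∑ i ∈ Finset.range (k+1), τM (F^[i] x) : ℕ) : ENNReal) ∂μ0).toReal := by
    intro k
    rw [Measure.restrict_congr_set (hTae k)]
    have hcongr : (fun y => (tauK f Y (k + 1) y : ℝ))
        =ᶠ[ae (μ0.restrict {x | ρM x = k + 2 ∧ ((n : ℕ) : ENNReal) < Φ x})]
        fun y => ((∑ i ∈ Finset.range (k+1), τM (F^[i] y) : ℕ) : ℝ) := by
      rw [Filter.EventuallyEq, ae_restrict_iff' (hTmeas k)]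
      filter_upwards [hgood] with x hx hxT
      have hρx : ρ x = k + 2 := by rw [hx.1]; exact hxT.1
      have h1 : tauK f Y (k + 1) x = ∑ i ∈ Finset.range (k+1), τM (F^[i] x) := by
        rw [tauK_eq_sum]
        refine Finset.sum_congr rfl (fun i hi => ?_)
        rw [← hF]
        exact hx.2 i (by have := Finset.mem_range.mp hi; rw [← hx.1]; omega)
      rw [h1]
    rw [integral_congr_ae hcongr]
    have hsm : Measurable (fun x => (∑ i ∈ Finset.range (k+1), τM (F^[i] x) : ℕ)) :=
      Finset.measurable_sum _ (fun i _ => hτM_meas.comp (hFmeas.iterate i))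
    have hsr : Measurable (fun x => ((∑ i ∈ Finset.range (k+1), τM (F^[i] x) : ℕ) : ℝ)) :=
      (measurable_from_top (f := (Nat.cast : ℕ → ℝ))).comp hsm
    rw [integral_eq_lintegral_of_nonneg_ae (Filter.Eventually.of_forall (fun x => by positivity))
      hsr.aestronglyMeasurable]
    congr 1
    apply lintegral_congr_ae
    apply Filter.Eventually.of_forall
    intro x
    simp only [ENNReal.ofReal_natCast]
  have hDind : ∫⁻ x, D x ∂μ0 = ∑' k : ℕ, ∫⁻ x in {x | ρM x = k + 2 ∧ ((n : ℕ) : ENNReal) < Φ x},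
      ((∑ i ∈ Finset.range (k+1), τM (F^[i] x) : ℕ) : ENNReal) ∂μ0 := by
    have h1 : ∀ x, D x = ∑' k : ℕ, Set.indicator {x | ρM x = k + 2 ∧ ((n : ℕ) : ENNReal) < Φ x}
        (fun x => ((∑ i ∈ Finset.range (k+1), τM (F^[i] x) : ℕ) : ENNReal)) x := by
      intro x
      simp only [hDdef]
      refine tsum_congr (fun k => ?_)
      rw [Set.indicator_apply]
      rfl
    simp_rw [h1]
    rw [lintegral_tsum (fun k => ((hvmeas k).indicator (hTmeas k)).aemeasurable)]
    exact tsum_congr (fun k => lintegral_indicator (hTmeas k) _)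
  have hR : (∑' k : ℕ, ∫ y in {y | ρ y = k + 2 ∧ n < φ y}, (tauK f Y (k + 1) y : ℝ) ∂μ0)
      = (∫⁻ x, D x ∂μ0).toReal := by
    rw [tsum_congr hre, ← ENNReal.tsum_toReal_eq hfink, hDind]
  -- final assembly
  have ha_sum : Summable (fun j : ℕ => (μ0 {y | n + j < φ y}).toReal) := by
    have h1 : Summable (fun j : ℕ => (μ0 {x | ((n + j : ℕ) : ENNReal) < Φ x}).toReal) :=
      ENNReal.summable_toReal hAfin
    exact h1.congr (fun j => (congrArg ENNReal.toReal (hμ0set j)).symm)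
  have hb_sum : Summable (fun j : ℕ => (μτ {y | n + j < tauFR f Y y}).toReal) :=
    ENNReal.summable_toReal hBtfin
  have hAt : (∑' j : ℕ, (μ0 {y | n + j < φ y}).toReal) = A.toReal := by
    rw [hAdef, ENNReal.tsum_toReal_eq (fun j => measure_ne_top _ _)]
    exact tsum_congr (fun j => congrArg ENNReal.toReal (hμ0set j))
  have hBtt : (∑' j : ℕ, (μτ {y | n + j < tauFR f Y y}).toReal) = Bt.toReal := by
    rw [hBtdef, ENNReal.tsum_toReal_eq (fun j => measure_ne_top _ _)]
  rw [Summable.tsum_sub (ha_sum.mul_left _) (hb_sum.mul_left _), tsum_mul_left, tsum_mul_left,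
    hAt, hBtt, hR]
  by_cases hφ0 : φbar = 0
  · have hτ0 : τbar = 0 := by
      have h1 := hφρτ
      rw [hφ0] at h1
      rcases mul_eq_zero.mp h1.symm with h | h
      · exact absurd h hρbar_ne
      · exact h
    rw [hφ0, hτ0]
    simp
  · have hφpos : 0 < φbar := lt_of_le_of_ne hφbar_nonneg (Ne.symm hφ0)
    have hτne : τbar ≠ 0 := by
      intro h
      rw [h, mul_zero] at hφρτ
      exact hφ0 hφρτ
    have hτval : 1 / τbar = ρbar / φbar := by
      rw [hφρτ]
      field_simp
    rw [hτval, show ρbar / φbar * Bt.toReal = 1 / φbar * (ρbar * Bt.toReal) by ring,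
      hBtC, ← mul_sub]
    have hone : 0 ≤ 1 / φbar := by positivity
    have hsub : 0 ≤ A.toReal - C.toReal :=
      sub_nonneg.mpr (ENNReal.toReal_mono hAfin hCA)
    rw [abs_of_nonneg (mul_nonneg hone hsub)]
    refine mul_le_mul_of_nonneg_left ?_ hone
    have h1 : A.toReal ≤ C.toReal + (∫⁻ x, D x ∂μ0).toReal := by
      calc A.toReal ≤ (C + ∫⁻ x, D x ∂μ0).toReal :=
            ENNReal.toReal_mono (ENNReal.add_ne_top.mpr ⟨hCfin, hDlint⟩) hACD
        _ = C.toReal + (∫⁻ x, D x ∂μ0).toReal := ENNReal.toReal_add hCfin hDlint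
    linarith
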